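/- arXiv:1905.02502 — 16 statements merged into one kernel-verified Lean document; each statement's English description precedes it below -/
import Mathlib

section
/- Let w ∈ V⊗V⊗V be a superpotential (i.e. φ(w) = w) and let θ be a linear automorphism of V belonging to Aut(w), say (θ⊗θ⊗θ)(w) = λ·w for some nonzero λ ∈ k. Then the MS twist w^θ = (θ²⊗θ⊗id)(w) is a twisted superpotential; more precisely, the linear automorphism θ' := λ⁻¹·θ³ of V satisfies (θ'⊗id⊗id)(φ(w^θ)) = w^θ. -/
open TensorProduct

/-- If `w` is a superpotential and `θ ∈ Aut(w)` with `(θ⊗θ⊗θ)(w) = λ•w`, `λ ≠ 0`, then the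
MS twist `w^θ = (θ²⊗θ⊗id)(w)` is a twisted superpotential; precisely,
`θ' := λ⁻¹•θ³` satisfies `(θ'⊗id⊗id)(φ(w^θ)) = w^θ`. -/
theorem stmt_0 (k : Type*) [Field k] [IsAlgClosed k] [CharZero k]
    (V : Type*) [AddCommGroup V] [Module k V] (B : Module.Basis (Fin 3) k V)
    (φ : (V ⊗[k] (V ⊗[k] V)) →ₗ[k] (V ⊗[k] (V ⊗[k] V)))
    (hφ : ∀ a b c : V, φ (a ⊗ₜ[k] (b ⊗ₜ[k] c)) = c ⊗ₜ[k] (a ⊗ₜ[k] b))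
    (w : V ⊗[k] (V ⊗[k] V)) (hw : φ w = w)
    (θ : V ≃ₗ[k] V) (lam : k) (hlam : lam ≠ 0)
    (hθ : TensorProduct.map θ.toLinearMap
      (TensorProduct.map θ.toLinearMap θ.toLinearMap) w = lam • w) :
    let wθ := TensorProduct.map (θ.toLinearMap ∘ₗ θ.toLinearMap)
      (TensorProduct.map θ.toLinearMap (LinearMap.id : V →ₗ[k] V)) w
    let θ' : V →ₗ[k] V := lam⁻¹ • (θ.toLinearMap ∘ₗ θ.toLinearMap ∘ₗ θ.toLinearMap)
    TensorProduct.map θ'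
      (TensorProduct.map (LinearMap.id : V →ₗ[k] V) (LinearMap.id : V →ₗ[k] V))
      (φ wθ) = wθ := by
  intro wθ θ'
  set t := θ.toLinearMap with ht
  -- commutation of φ with maps
  have key : ∀ (f g h : V →ₗ[k] V) (u : V ⊗[k] (V ⊗[k] V)),
      φ (TensorProduct.map f (TensorProduct.map g h) u)
        = TensorProduct.map h (TensorProduct.map f g) (φ u) := by
    intro f g h u
    have : φ ∘ₗ TensorProduct.map f (TensorProduct.map g h)
        = (TensorProduct.map h (TensorProduct.map f g)) ∘ₗ φ := by
      apply TensorProduct.ext'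
      intro a bc
      induction bc using TensorProduct.induction_on with
      | zero => simp
      | tmul b c => simp [hφ]
      | add x y hx hy =>
          simp only [tmul_add, map_add] at *
          rw [hx, hy]
    exact DFunLike.congr_fun this u
  have h1 : φ wθ = TensorProduct.map LinearMap.id
      (TensorProduct.map (t ∘ₗ t) t) w := by
    show φ (TensorProduct.map (t ∘ₗ t) (TensorProduct.map t LinearMap.id) w) = _
    rw [key, hw]
  show TensorProduct.map θ' (TensorProduct.map LinearMap.id LinearMap.id) (φ wθ) = wθ
  rw [h1]
  have h2 : TensorProduct.map θ' (TensorProduct.map LinearMap.id LinearMap.id)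
      (TensorProduct.map LinearMap.id (TensorProduct.map (t ∘ₗ t) t) w)
      = lam⁻¹ • TensorProduct.map (t ∘ₗ t ∘ₗ t) (TensorProduct.map (t ∘ₗ t) t) w := by
    rw [← LinearMap.comp_apply, ← TensorProduct.map_comp, ← TensorProduct.map_comp]
    simp only [LinearMap.comp_id, LinearMap.id_comp]
    show TensorProduct.map (lam⁻¹ • (t ∘ₗ t ∘ₗ t)) (TensorProduct.map (t ∘ₗ t) t) w = _
    rw [TensorProduct.map_smul_left, LinearMap.smul_apply]
  rw [h2]
  have h3 : TensorProduct.map (t ∘ₗ t ∘ₗ t) (TensorProduct.map (t ∘ₗ t) t) w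
      = TensorProduct.map (t ∘ₗ t) (TensorProduct.map t LinearMap.id)
        (TensorProduct.map t (TensorProduct.map t t) w) := by
    rw [← LinearMap.comp_apply, ← TensorProduct.map_comp, ← TensorProduct.map_comp]
    simp only [LinearMap.comp_id, LinearMap.id_comp, LinearMap.comp_assoc]
  rw [h3, hθ, map_smul, smul_smul, inv_mul_cancel₀ hlam, one_smul]
end

section
/- (Type P₁) For α, β, γ ∈ k with αβγ ≠ 0, the potential w = α²β·xyz + β²γ·yzx + γ²α·zxy − α²γ·xzy − γ²β·zyx − β²α·yxz ∈ V⊗V⊗V is a twisted superpotential; that is, there exists a linear automorphism θ of V such that (θ⊗id⊗id)(φ(w)) = w. -/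
open TensorProduct

theorem stmt_4 (k : Type*) [Field k] [IsAlgClosed k] [CharZero k]
    (V : Type*) [AddCommGroup V] [Module k V] (B : Module.Basis (Fin 3) k V)
    (φ : (V ⊗[k] (V ⊗[k] V)) →ₗ[k] (V ⊗[k] (V ⊗[k] V)))
    (hφ : ∀ a b c : V, φ (a ⊗ₜ[k] (b ⊗ₜ[k] c)) = c ⊗ₜ[k] (a ⊗ₜ[k] b))
    (α β γ : k) (h : α * β * γ ≠ 0) :
    let x := B 0; let y := B 1; let z := B 2
    let t : V → V → V → V ⊗[k] (V ⊗[k] V) := fun u v w => u ⊗ₜ[k] (v ⊗ₜ[k] w)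
    let w := (α^2*β) • t x y z + (β^2*γ) • t y z x + (γ^2*α) • t z x y
      - (α^2*γ) • t x z y - (γ^2*β) • t z y x - (β^2*α) • t y x z
    ∃ θ : V ≃ₗ[k] V,
      TensorProduct.map θ.toLinearMap
        (TensorProduct.map (LinearMap.id : V →ₗ[k] V) (LinearMap.id : V →ₗ[k] V))
        (φ w) = w := by
  intro x y z t w
  have hα : α ≠ 0 := fun hh => h (by simp [hh])
  have hβ : β ≠ 0 := fun hh => h (by simp [hh])
  have hγ : γ ≠ 0 := fun hh => h (by simp [hh])
  set lam : Fin 3 → k := ![α^2/(β*γ), β^2/(γ*α), γ^2/(α*β)] with hlam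
  have hlamne : ∀ i, lam i ≠ 0 := by
    intro i
    fin_cases i <;>
      simp [hlam, div_eq_zero_iff, pow_eq_zero_iff, hα, hβ, hγ, mul_eq_zero]
  let θ₀ : V →ₗ[k] V := B.constr k (fun i => lam i • B i)
  let θ₁ : V →ₗ[k] V := B.constr k (fun i => (lam i)⁻¹ • B i)
  have h10 : θ₁.comp θ₀ = LinearMap.id := by
    apply B.ext
    intro i
    simp [θ₀, θ₁, Module.Basis.constr_basis, smul_smul, inv_mul_cancel₀ (hlamne i), mul_inv_cancel₀ (hlamne i)]
  have h01 : θ₀.comp θ₁ = LinearMap.id := by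
    apply B.ext
    intro i
    simp [θ₀, θ₁, Module.Basis.constr_basis, smul_smul, inv_mul_cancel₀ (hlamne i), mul_inv_cancel₀ (hlamne i)]
  refine ⟨LinearEquiv.ofLinear θ₀ θ₁ h01 h10, ?_⟩
  have hθ : ∀ i, θ₀ (B i) = lam i • B i := fun i => B.constr_basis k _ i
  have hx : θ₀ x = (α^2/(β*γ)) • x := by simpa [hlam] using hθ 0
  have hy : θ₀ y = (β^2/(γ*α)) • y := by simpa [hlam] using hθ 1
  have hz : θ₀ z = (γ^2/(α*β)) • z := by simpa [hlam] using hθ 2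
  have e1 : β^2*γ * (α^2/(β*γ)) = α^2*β := by field_simp
  have e2 : γ^2*α * (β^2/(γ*α)) = β^2*γ := by field_simp
  have e3 : α^2*β * (γ^2/(α*β)) = γ^2*α := by field_simp
  have e4 : γ^2*β * (α^2/(β*γ)) = α^2*γ := by field_simp
  have e5 : α^2*γ * (β^2/(γ*α)) = β^2*α := by field_simp
  have e6 : β^2*α * (γ^2/(α*β)) = γ^2*β := by field_simp
  show TensorProduct.map θ₀ _ (φ w) = w
  simp only [w, t, map_add, map_sub, map_smul, hφ, TensorProduct.map_tmul,
    LinearMap.id_coe, id_eq, hx, hy, hz, tmul_smul, ← smul_tmul', smul_smul,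
    e1, e2, e3, e4, e5, e6]
  abel
end

section
/- (Type P₂) For α ∈ k with α ≠ 0, the potential w = xyz + α·yzx + α²·zxy − α·xzy − α²·zyx − yxz + yyz − 2α·yzy + α²·zyy ∈ V⊗V⊗V is a twisted superpotential; that is, there exists a linear automorphism θ of V such that (θ⊗id⊗id)(φ(w)) = w. -/
open TensorProduct

theorem stmt_5 (k : Type*) [Field k] [IsAlgClosed k] [CharZero k]
    (V : Type*) [AddCommGroup V] [Module k V] (B : Module.Basis (Fin 3) k V)
    (φ : (V ⊗[k] (V ⊗[k] V)) →ₗ[k] (V ⊗[k] (V ⊗[k] V)))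
    (hφ : ∀ a b c : V, φ (a ⊗ₜ[k] (b ⊗ₜ[k] c)) = c ⊗ₜ[k] (a ⊗ₜ[k] b))
    (α : k) (h : α ≠ 0) :
    let x := B 0; let y := B 1; let z := B 2
    let t : V → V → V → V ⊗[k] (V ⊗[k] V) := fun u v w => u ⊗ₜ[k] (v ⊗ₜ[k] w)
    let w := t x y z + α • t y z x + α^2 • t z x y - α • t x z y - α^2 • t z y x
      - t y x z + t y y z - (2*α) • t y z y + α^2 • t z y y
    ∃ θ : V ≃ₗ[k] V,
      TensorProduct.map θ.toLinearMap
        (TensorProduct.map (LinearMap.id : V →ₗ[k] V) (LinearMap.id : V →ₗ[k] V))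
        (φ w) = w := by
  intro x y z t w
  set f : V →ₗ[k] V :=
    B.constr k ![α⁻¹ • B 0 + (3*α⁻¹) • B 1, α⁻¹ • B 1, α^2 • B 2] with hf
  set g : V →ₗ[k] V :=
    B.constr k ![α • B 0 - (3*α) • B 1, α • B 1, (α^2)⁻¹ • B 2] with hg
  have hfg : f ∘ₗ g = LinearMap.id := by
    apply B.ext; intro i
    fin_cases i <;>
      simp [hf, hg, Module.Basis.constr_basis, map_add, map_sub, map_smul,
        Matrix.cons_val_zero, Matrix.cons_val_one, smul_smul] <;>
      match_scalars <;> field_simp <;> ring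
  have hgf : g ∘ₗ f = LinearMap.id := by
    apply B.ext; intro i
    fin_cases i <;>
      simp [hf, hg, Module.Basis.constr_basis, map_add, map_sub, map_smul,
        Matrix.cons_val_zero, Matrix.cons_val_one, smul_smul] <;>
      match_scalars <;> field_simp <;> ring
  refine ⟨LinearEquiv.ofLinear f g hfg hgf, ?_⟩
  have hφw : φ w = t z x y + α • t x y z + α^2 • t y z x - α • t y x z
      - α^2 • t x z y - t z y x + t z y y - (2*α) • t y y z + α^2 • t y z y := by
    simp only [w, map_add, map_sub, map_smul, t, hφ]
  rw [hφw]
  simp only [t, map_add, map_sub, map_smul, LinearEquiv.ofLinear_toLinearMap,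
    TensorProduct.map_tmul, LinearMap.id_coe, id_eq]
  have hx : f x = α⁻¹ • B 0 + (3*α⁻¹) • B 1 := by
    simp [hf, x, Module.Basis.constr_basis]
  have hy : f y = α⁻¹ • B 1 := by simp [hf, y, Module.Basis.constr_basis]
  have hz : f z = α^2 • B 2 := by simp [hf, z, Module.Basis.constr_basis]
  rw [hx, hy, hz]
  simp only [x, y, z, w, t, TensorProduct.add_tmul, ← TensorProduct.smul_tmul', smul_smul]
  match_scalars <;> field_simp <;> ring
end

section
/- (Type P₃) The potential w = −xyz − yzx − zxy + xzy + zyx + yxz − zzx + 2·zxz − xzz − zyy + zyz + zzy − yyz + 2·yzy − 2·yzz − zzz ∈ V⊗V⊗V is a twisted superpotential; that is, there exists a linear automorphism θ of V such that (θ⊗id⊗id)(φ(w)) = w. -/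
open TensorProduct

theorem stmt_6 (k : Type*) [Field k] [IsAlgClosed k] [CharZero k]
    (V : Type*) [AddCommGroup V] [Module k V] (B : Module.Basis (Fin 3) k V)
    (φ : (V ⊗[k] (V ⊗[k] V)) →ₗ[k] (V ⊗[k] (V ⊗[k] V)))
    (hφ : ∀ a b c : V, φ (a ⊗ₜ[k] (b ⊗ₜ[k] c)) = c ⊗ₜ[k] (a ⊗ₜ[k] b)) :
    let x := B 0; let y := B 1; let z := B 2
    let t : V → V → V → V ⊗[k] (V ⊗[k] V) := fun u v w => u ⊗ₜ[k] (v ⊗ₜ[k] w)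
    let w := - t x y z - t y z x - t z x y + t x z y + t z y x + t y x z
      - t z z x + (2:k) • t z x z - t x z z - t z y y + t z y z + t z z y
      - t y y z + (2:k) • t y z y - (2:k) • t y z z - t z z z
    ∃ θ : V ≃ₗ[k] V,
      TensorProduct.map θ.toLinearMap
        (TensorProduct.map (LinearMap.id : V →ₗ[k] V) (LinearMap.id : V →ₗ[k] V))
        (φ w) = w := by
  intro x y z t w
  set f : V →ₗ[k] V :=
    B.constr k ![B 0 + (3:k) • B 1 + (3:k) • B 2, B 1 + (3:k) • B 2, B 2] with hf
  set g : V →ₗ[k] V :=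
    B.constr k ![B 0 - (3:k) • B 1 + (6:k) • B 2, B 1 - (3:k) • B 2, B 2] with hg
  have hf0 : f (B 0) = B 0 + (3:k) • B 1 + (3:k) • B 2 := by rw [hf, Module.Basis.constr_basis]; rfl
  have hf1 : f (B 1) = B 1 + (3:k) • B 2 := by rw [hf, Module.Basis.constr_basis]; rfl
  have hf2 : f (B 2) = B 2 := by rw [hf, Module.Basis.constr_basis]; rfl
  have hg0 : g (B 0) = B 0 - (3:k) • B 1 + (6:k) • B 2 := by rw [hg, Module.Basis.constr_basis]; rfl
  have hg1 : g (B 1) = B 1 - (3:k) • B 2 := by rw [hg, Module.Basis.constr_basis]; rfl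
  have hg2 : g (B 2) = B 2 := by rw [hg, Module.Basis.constr_basis]; rfl
  have hfg : f.comp g = LinearMap.id := by
    apply B.ext; intro i
    fin_cases i <;>
      · show f (g _) = _
        simp only [show (⟨0, by norm_num⟩ : Fin 3) = 0 from rfl,
          show (⟨1, by norm_num⟩ : Fin 3) = 1 from rfl,
          show (⟨2, by norm_num⟩ : Fin 3) = 2 from rfl,
          hg0, hg1, hg2, map_add, map_sub, map_smul, hf0, hf1, hf2,
          LinearMap.id_apply, LinearMap.comp_apply]
        try module
  have hgf : g.comp f = LinearMap.id := by
    apply B.ext; intro i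
    fin_cases i <;>
      · show g (f _) = _
        simp only [show (⟨0, by norm_num⟩ : Fin 3) = 0 from rfl,
          show (⟨1, by norm_num⟩ : Fin 3) = 1 from rfl,
          show (⟨2, by norm_num⟩ : Fin 3) = 2 from rfl,
          hf0, hf1, hf2, map_add, map_sub, map_smul, hg0, hg1, hg2,
          LinearMap.id_apply, LinearMap.comp_apply]
        try module
  refine ⟨LinearEquiv.ofLinear f g hfg hgf, ?_⟩
  show TensorProduct.map f (TensorProduct.map LinearMap.id LinearMap.id) (φ w) = w
  have hw : w =
      - (B 0) ⊗ₜ[k] ((B 1) ⊗ₜ[k] (B 2)) - (B 1) ⊗ₜ[k] ((B 2) ⊗ₜ[k] (B 0))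
      - (B 2) ⊗ₜ[k] ((B 0) ⊗ₜ[k] (B 1)) + (B 0) ⊗ₜ[k] ((B 2) ⊗ₜ[k] (B 1))
      + (B 2) ⊗ₜ[k] ((B 1) ⊗ₜ[k] (B 0)) + (B 1) ⊗ₜ[k] ((B 0) ⊗ₜ[k] (B 2))
      - (B 2) ⊗ₜ[k] ((B 2) ⊗ₜ[k] (B 0)) + (2:k) • (B 2) ⊗ₜ[k] ((B 0) ⊗ₜ[k] (B 2))
      - (B 0) ⊗ₜ[k] ((B 2) ⊗ₜ[k] (B 2)) - (B 2) ⊗ₜ[k] ((B 1) ⊗ₜ[k] (B 1))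
      + (B 2) ⊗ₜ[k] ((B 1) ⊗ₜ[k] (B 2)) + (B 2) ⊗ₜ[k] ((B 2) ⊗ₜ[k] (B 1))
      - (B 1) ⊗ₜ[k] ((B 1) ⊗ₜ[k] (B 2)) + (2:k) • (B 1) ⊗ₜ[k] ((B 2) ⊗ₜ[k] (B 1))
      - (2:k) • (B 1) ⊗ₜ[k] ((B 2) ⊗ₜ[k] (B 2)) - (B 2) ⊗ₜ[k] ((B 2) ⊗ₜ[k] (B 2)) := rfl
  rw [hw]
  simp only [map_add, map_sub, map_neg, map_smul, hφ, TensorProduct.map_tmul,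
    LinearMap.id_apply]
  simp only [hf0, hf1, hf2]
  simp only [add_tmul, ← smul_tmul']
  module
end

section
/- (Type S₁) For α, β, γ ∈ k with αβγ ≠ 0 and αβγ ≠ 1, the potential w = β·xyz + γ·yzx + α·zxy − αβ·xzy − αγ·zyx − βγ·yxz ∈ V⊗V⊗V is a twisted superpotential; that is, there exists a linear automorphism θ of V such that (θ⊗id⊗id)(φ(w)) = w. -/
open TensorProduct

theorem stmt_7 (k : Type*) [Field k] [IsAlgClosed k] [CharZero k]
    (V : Type*) [AddCommGroup V] [Module k V] (B : Module.Basis (Fin 3) k V)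
    (φ : (V ⊗[k] (V ⊗[k] V)) →ₗ[k] (V ⊗[k] (V ⊗[k] V)))
    (hφ : ∀ a b c : V, φ (a ⊗ₜ[k] (b ⊗ₜ[k] c)) = c ⊗ₜ[k] (a ⊗ₜ[k] b))
    (α β γ : k) (h0 : α * β * γ ≠ 0) (h1 : α * β * γ ≠ 1) :
    let x := B 0; let y := B 1; let z := B 2
    let t : V → V → V → V ⊗[k] (V ⊗[k] V) := fun u v w => u ⊗ₜ[k] (v ⊗ₜ[k] w)
    let w := β • t x y z + γ • t y z x + α • t z x y
      - (α*β) • t x z y - (α*γ) • t z y x - (β*γ) • t y x z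
    ∃ θ : V ≃ₗ[k] V,
      TensorProduct.map θ.toLinearMap
        (TensorProduct.map (LinearMap.id : V →ₗ[k] V) (LinearMap.id : V →ₗ[k] V))
        (φ w) = w := by
  intro x y z t w
  have hα : α ≠ 0 := fun h => h0 (by rw [h]; ring)
  have hβ : β ≠ 0 := fun h => h0 (by rw [h]; ring)
  have hγ : γ ≠ 0 := fun h => h0 (by rw [h]; ring)
  set c : Fin 3 → k := ![β/γ, γ/α, α/β] with hc
  set d : Fin 3 → k := ![γ/β, α/γ, β/α] with hd
  have hcd : ∀ i, d i * c i = 1 := by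
    intro i; fin_cases i <;> simp [hc, hd] <;> field_simp
  have hdc : ∀ i, c i * d i = 1 := by
    intro i; fin_cases i <;> simp [hc, hd] <;> field_simp
  let f : V →ₗ[k] V := B.constr k fun i => c i • B i
  let g : V →ₗ[k] V := B.constr k fun i => d i • B i
  have hf : ∀ i, f (B i) = c i • B i := fun i => B.constr_basis k _ i
  have hg : ∀ i, g (B i) = d i • B i := fun i => B.constr_basis k _ i
  have hfg : f ∘ₗ g = LinearMap.id := by
    apply B.ext; intro i
    simp [f, g, B.constr_basis, smul_smul, hcd i]
  have hgf : g ∘ₗ f = LinearMap.id := by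
    apply B.ext; intro i
    simp [f, g, B.constr_basis, smul_smul, hdc i]
  refine ⟨LinearEquiv.ofLinear f g hfg hgf, ?_⟩
  have hφw : φ w = γ • t x y z + α • t y z x + β • t z x y
      - (α*γ) • t x z y - (β*γ) • t z y x - (α*β) • t y x z := by
    simp only [w, t, map_add, map_sub, map_smul, hφ]
    abel
  rw [hφw]
  have hθ : (LinearEquiv.ofLinear f g hfg hgf).toLinearMap = f := rfl
  rw [hθ]
  have hfx : f x = (β/γ) • x := by simpa [hc] using hf 0
  have hfy : f y = (γ/α) • y := by simpa [hc] using hf 1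
  have hfz : f z = (α/β) • z := by simpa [hc] using hf 2
  have e1 : γ * (β/γ) = β := by field_simp
  have e2 : α * (γ/α) = γ := by field_simp
  have e3 : β * (α/β) = α := by field_simp
  have e4 : (α*γ) * (β/γ) = α*β := by field_simp
  have e5 : (β*γ) * (α/β) = α*γ := by field_simp
  have e6 : (α*β) * (γ/α) = β*γ := by field_simp
  simp only [t, map_add, map_sub, map_smul, TensorProduct.map_tmul,
    LinearMap.id_apply, hfx, hfy, hfz, smul_tmul', smul_smul, e1, e2, e3, e4, e5, e6]
  simp only [w, t, smul_tmul']
end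

section
/- (Type S₂) For α, β ∈ k with αβ ≠ 0, the potential w = −yzx − xzy + β⁻¹·xxz + α⁻¹·zxx + α·yyz + β·zyy ∈ V⊗V⊗V is a twisted superpotential; that is, there exists a linear automorphism θ of V such that (θ⊗id⊗id)(φ(w)) = w. -/
open TensorProduct

theorem stmt_8 (k : Type*) [Field k] [IsAlgClosed k] [CharZero k]
    (V : Type*) [AddCommGroup V] [Module k V] (B : Module.Basis (Fin 3) k V)
    (φ : (V ⊗[k] (V ⊗[k] V)) →ₗ[k] (V ⊗[k] (V ⊗[k] V)))
    (hφ : ∀ a b c : V, φ (a ⊗ₜ[k] (b ⊗ₜ[k] c)) = c ⊗ₜ[k] (a ⊗ₜ[k] b))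
    (α β : k) (h : α * β ≠ 0) :
    let x := B 0; let y := B 1; let z := B 2
    let t : V → V → V → V ⊗[k] (V ⊗[k] V) := fun u v w => u ⊗ₜ[k] (v ⊗ₜ[k] w)
    let w := - t y z x - t x z y + β⁻¹ • t x x z + α⁻¹ • t z x x
      + α • t y y z + β • t z y y
    ∃ θ : V ≃ₗ[k] V,
      TensorProduct.map θ.toLinearMap
        (TensorProduct.map (LinearMap.id : V →ₗ[k] V) (LinearMap.id : V →ₗ[k] V))
        (φ w) = w := by
  intro x y z t w
  have hα : α ≠ 0 := fun hh => h (by simp [hh])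
  have hβ : β ≠ 0 := fun hh => h (by simp [hh])
  set f : V →ₗ[k] V := B.constr k ![(-α) • B 1, (-β⁻¹) • B 0, (β * α⁻¹) • B 2] with hf
  set g : V →ₗ[k] V := B.constr k ![(-β) • B 1, (-α⁻¹) • B 0, (α * β⁻¹) • B 2] with hg
  have hfB : ∀ i, f (B i) = ![(-α) • B 1, (-β⁻¹) • B 0, (β * α⁻¹) • B 2] i := by
    intro i; simp [hf]
  have hgB : ∀ i, g (B i) = ![(-β) • B 1, (-α⁻¹) • B 0, (α * β⁻¹) • B 2] i := by
    intro i; simp [hg]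
  have hfg : f.comp g = LinearMap.id := by
    apply B.ext; intro i
    fin_cases i <;>
      simp [hgB, hfB, map_smul, smul_smul, hα, hβ, mul_comm, mul_assoc, mul_left_comm,
        inv_mul_cancel₀, mul_inv_cancel₀]
    rw [show α * (β * (α⁻¹ * β⁻¹)) = 1 by field_simp, one_smul]
  have hgf : g.comp f = LinearMap.id := by
    apply B.ext; intro i
    fin_cases i <;>
      simp [hgB, hfB, map_smul, smul_smul, hα, hβ, mul_comm, mul_assoc, mul_left_comm,
        inv_mul_cancel₀, mul_inv_cancel₀]
    rw [show α * (β * (α⁻¹ * β⁻¹)) = 1 by field_simp, one_smul]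
  refine ⟨LinearEquiv.ofLinear f g hfg hgf, ?_⟩
  have hfx : f x = (-α) • y := hfB 0
  have hfy : f y = (-β⁻¹) • x := hfB 1
  have hfz : f z = (β * α⁻¹) • z := hfB 2
  show TensorProduct.map f _ (φ w) = w
  have hφw : φ w = - t x y z - t y x z + β⁻¹ • t z x x + α⁻¹ • t x z x
      + α • t z y y + β • t y z y := by
    simp only [w, map_add, map_sub, map_neg, map_smul, hφ, t]
  rw [hφw]
  simp only [map_add, map_sub, map_neg, map_smul, TensorProduct.map_tmul,
    LinearMap.id_apply, t, hfx, hfy, hfz]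
  simp only [TensorProduct.smul_tmul', smul_smul, w, t]
  rw [show β⁻¹ * (β * α⁻¹) = α⁻¹ by field_simp, show α⁻¹ * -α = -1 by field_simp,
    show α * (β * α⁻¹) = β by field_simp, show β * -β⁻¹ = -1 by field_simp]
  simp only [← TensorProduct.smul_tmul', smul_smul]
  module
end

section
/- (Type S'₁) For α, β ∈ k with αβ² ≠ 0 and αβ² ≠ 1, the potential w = β·xyz + β·yzx + α·zxy − αβ·xzy − αβ·zyx − β²·yxz + β·xxx ∈ V⊗V⊗V is a twisted superpotential; that is, there exists a linear automorphism θ of V such that (θ⊗id⊗id)(φ(w)) = w. -/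
open TensorProduct

theorem stmt_9 (k : Type*) [Field k] [IsAlgClosed k] [CharZero k]
    (V : Type*) [AddCommGroup V] [Module k V] (B : Module.Basis (Fin 3) k V)
    (φ : (V ⊗[k] (V ⊗[k] V)) →ₗ[k] (V ⊗[k] (V ⊗[k] V)))
    (hφ : ∀ a b c : V, φ (a ⊗ₜ[k] (b ⊗ₜ[k] c)) = c ⊗ₜ[k] (a ⊗ₜ[k] b))
    (α β : k) (h0 : α * β^2 ≠ 0) (h1 : α * β^2 ≠ 1) :
    let x := B 0; let y := B 1; let z := B 2
    let t : V → V → V → V ⊗[k] (V ⊗[k] V) := fun u v w => u ⊗ₜ[k] (v ⊗ₜ[k] w)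
    let w := β • t x y z + β • t y z x + α • t z x y - (α*β) • t x z y
      - (α*β) • t z y x - β^2 • t y x z + β • t x x x
    ∃ θ : V ≃ₗ[k] V,
      TensorProduct.map θ.toLinearMap
        (TensorProduct.map (LinearMap.id : V →ₗ[k] V) (LinearMap.id : V →ₗ[k] V))
        (φ w) = w := by
  intro x y z t w
  have hα : α ≠ 0 := fun h => h0 (by simp [h])
  have hβ : β ≠ 0 := fun h => h0 (by simp [h])
  have hdne : ∀ i : Fin 3, (![1, β/α, α/β] : Fin 3 → k) i ≠ 0 := by
    intro i
    fin_cases i <;> simp [hα, hβ, div_eq_zero_iff]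
  let f : V →ₗ[k] V := B.constr k (fun i => (![1, β/α, α/β] : Fin 3 → k) i • B i)
  let g : V →ₗ[k] V := B.constr k (fun i => ((![1, β/α, α/β] : Fin 3 → k) i)⁻¹ • B i)
  have hfB : ∀ i, f (B i) = (![1, β/α, α/β] : Fin 3 → k) i • B i :=
    fun i => B.constr_basis k _ i
  have hgB : ∀ i, g (B i) = ((![1, β/α, α/β] : Fin 3 → k) i)⁻¹ • B i :=
    fun i => B.constr_basis k _ i
  have hfg : f.comp g = LinearMap.id := by
    apply B.ext
    intro i
    simp [hgB, hfB, smul_smul, inv_mul_cancel₀ (hdne i)]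
  have hgf : g.comp f = LinearMap.id := by
    apply B.ext
    intro i
    simp [hgB, hfB, smul_smul, mul_inv_cancel₀ (hdne i)]
  refine ⟨LinearEquiv.ofLinear f g hfg hgf, ?_⟩
  have hφw : φ w = β • t z x y + β • t x y z + α • t y z x - (α*β) • t y x z
      - (α*β) • t x z y - β^2 • t z y x + β • t x x x := by
    simp only [w, t, map_add, map_sub, map_smul, hφ]
  rw [hφw]
  have hfx : f x = x := by rw [show x = B 0 from rfl, hfB]; simp
  have hfy : f y = (β/α) • y := by rw [show y = B 1 from rfl, hfB]; simp
  have hfz : f z = (α/β) • z := by rw [show z = B 2 from rfl, hfB]; simp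
  simp only [t, map_add, map_sub, map_smul, TensorProduct.map_tmul,
    LinearMap.id_coe, id_eq, LinearEquiv.coe_coe, LinearEquiv.ofLinear_apply,
    hfx, hfy, hfz]
  simp only [w, t, smul_tmul', smul_smul]
  have e1 : β * (α/β) = α := by field_simp
  have e2 : α * (β/α) = β := by field_simp
  have e3 : α * β * (β/α) = β^2 := by field_simp
  have e4 : β^2 * (α/β) = α * β := by field_simp
  rw [e1, e2, e3, e4]
  abel
end

section
/- (Type S'₂) The potential w = −zxy − yxz + xyy + yyx + xzz + zzx + xxx ∈ V⊗V⊗V is a twisted superpotential; that is, there exists a linear automorphism θ of V such that (θ⊗id⊗id)(φ(w)) = w. -/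
set_option maxHeartbeats 1000000


open TensorProduct

theorem stmt_10 (k : Type*) [Field k] [IsAlgClosed k] [CharZero k]
    (V : Type*) [AddCommGroup V] [Module k V] (B : Module.Basis (Fin 3) k V)
    (φ : (V ⊗[k] (V ⊗[k] V)) →ₗ[k] (V ⊗[k] (V ⊗[k] V)))
    (hφ : ∀ a b c : V, φ (a ⊗ₜ[k] (b ⊗ₜ[k] c)) = c ⊗ₜ[k] (a ⊗ₜ[k] b)) :
    let x := B 0; let y := B 1; let z := B 2
    let t : V → V → V → V ⊗[k] (V ⊗[k] V) := fun u v w => u ⊗ₜ[k] (v ⊗ₜ[k] w)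
    let w := - t z x y - t y x z + t x y y + t y y x + t x z z + t z z x + t x x x
    ∃ θ : V ≃ₗ[k] V,
      TensorProduct.map θ.toLinearMap
        (TensorProduct.map (LinearMap.id : V →ₗ[k] V) (LinearMap.id : V →ₗ[k] V))
        (φ w) = w := by
  intro x y z t w
  set f : V →ₗ[k] V := B.constr k ![B 0, -B 2, -B 1] with hf
  have hx : f (B 0) = B 0 := by simp [hf, Module.Basis.constr_basis]
  have hy : f (B 1) = -B 2 := by simp [hf, Module.Basis.constr_basis]
  have hz : f (B 2) = -B 1 := by simp [hf, Module.Basis.constr_basis]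
  have hff : f ∘ₗ f = LinearMap.id := by
    apply B.ext
    intro i
    fin_cases i <;> simp [hx, hy, hz]
  refine ⟨LinearEquiv.ofLinear f f hff hff, ?_⟩
  have hx' : f x = x := hx
  have hy' : f y = -z := hy
  have hz' : f z = -y := hz
  show TensorProduct.map _ _ (φ (- t z x y - t y x z + t x y y + t y y x + t x z z + t z z x + t x x x)) = _
  simp only [t, map_sub, map_add, map_neg, hφ, map_tmul, LinearEquiv.coe_coe,
    LinearEquiv.ofLinear_apply, LinearMap.id_coe, id_eq, hx', hy', hz',
    TensorProduct.neg_tmul]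
  simp only [w, t]
  abel_nf
end

section
/- (Type T₁) For α, β, γ ∈ k with α + β + γ ≠ 0, the potential w = β·xxy + (α−β+γ)·xyx + (α−β−γ)·yxy − α·yyx − yxz + yzx + β·yxx + xyz − xzy − α·xyy + zxy − zyx ∈ V⊗V⊗V is a twisted superpotential; that is, there exists a linear automorphism θ of V such that (θ⊗id⊗id)(φ(w)) = w. -/
open TensorProduct

theorem stmt_11 (k : Type*) [Field k] [IsAlgClosed k] [CharZero k]
    (V : Type*) [AddCommGroup V] [Module k V] (B : Module.Basis (Fin 3) k V)
    (φ : (V ⊗[k] (V ⊗[k] V)) →ₗ[k] (V ⊗[k] (V ⊗[k] V)))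
    (hφ : ∀ a b c : V, φ (a ⊗ₜ[k] (b ⊗ₜ[k] c)) = c ⊗ₜ[k] (a ⊗ₜ[k] b))
    (α β γ : k) (h : α + β + γ ≠ 0) :
    let x := B 0; let y := B 1; let z := B 2
    let t : V → V → V → V ⊗[k] (V ⊗[k] V) := fun u v w => u ⊗ₜ[k] (v ⊗ₜ[k] w)
    let w := β • t x x y + (α-β+γ) • t x y x + (α-β-γ) • t y x y
      - α • t y y x - t y x z + t y z x + β • t y x x + t x y z - t x z y
      - α • t x y y + t z x y - t z y x
    ∃ θ : V ≃ₗ[k] V,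
      TensorProduct.map θ.toLinearMap
        (TensorProduct.map (LinearMap.id : V →ₗ[k] V) (LinearMap.id : V →ₗ[k] V))
        (φ w) = w := by
  intro x y z t w
  set u : V := (2*β - α - γ) • x + (2*α - β - γ) • y with hu
  have hcu : B.coord 2 u = 0 := by
    simp [hu, x, y, Module.Basis.coord_apply]
  refine ⟨LinearEquiv.ofLinear
    (LinearMap.id + (B.coord 2).smulRight u)
    (LinearMap.id - (B.coord 2).smulRight u) ?_ ?_, ?_⟩
  · ext v
    simp [map_sub, hcu]
  · ext v
    simp [map_add, hcu]
  · have hx : B.coord 2 x = 0 := by simp [x, Module.Basis.coord_apply]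
    have hy : B.coord 2 y = 0 := by simp [y, Module.Basis.coord_apply]
    have hz : B.coord 2 z = 1 := by simp [z, Module.Basis.coord_apply]
    simp only [w, t, map_add, map_sub, map_smul, hφ, TensorProduct.map_tmul,
      LinearEquiv.ofLinear_apply, LinearMap.add_apply, LinearMap.id_apply,
      LinearMap.coe_smulRight, hx, hy, hz, zero_smul, add_zero, one_smul,
      LinearEquiv.coe_coe, hu]
    simp only [add_tmul, ← smul_tmul', smul_smul]
    module
end

section
/- (Type T') For α, β ∈ k with α + 2β ≠ 0, the potential w = α·xxy − (α−2β)·xyx + (β²−αβ)·xyy + xyz − xzy + α·yxx − yxz + yzx − α·yzy + αβ²·yyy − (β²−αβ)·yyx − β·yyz + zxy − zyx − β·zyy ∈ V⊗V⊗V is a twisted superpotential; that is, there exists a linear automorphism θ of V such that (θ⊗id⊗id)(φ(w)) = w. -/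
open TensorProduct

theorem stmt_13 (k : Type*) [Field k] [IsAlgClosed k] [CharZero k]
    (V : Type*) [AddCommGroup V] [Module k V] (B : Module.Basis (Fin 3) k V)
    (φ : (V ⊗[k] (V ⊗[k] V)) →ₗ[k] (V ⊗[k] (V ⊗[k] V)))
    (hφ : ∀ a b c : V, φ (a ⊗ₜ[k] (b ⊗ₜ[k] c)) = c ⊗ₜ[k] (a ⊗ₜ[k] b))
    (α β : k) (h : α + 2*β ≠ 0) :
    let x := B 0; let y := B 1; let z := B 2
    let t : V → V → V → V ⊗[k] (V ⊗[k] V) := fun u v w => u ⊗ₜ[k] (v ⊗ₜ[k] w)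
    let w := α • t x x y - (α-2*β) • t x y x + (β^2-α*β) • t x y y
      + t x y z - t x z y + α • t y x x - t y x z + t y z x - α • t y z y
      + (α*β^2) • t y y y - (β^2-α*β) • t y y x - β • t y y z
      + t z x y - t z y x - β • t z y y
    ∃ θ : V ≃ₗ[k] V,
      TensorProduct.map θ.toLinearMap
        (TensorProduct.map (LinearMap.id : V →ₗ[k] V) (LinearMap.id : V →ₗ[k] V))
        (φ w) = w := by
  intro x y z t w
  set f : V →ₗ[k] V := B.constr k
    ![B 0 + (α-β) • B 1, B 1, (2*(α-β)) • B 0 + ((α-β)^2) • B 1 + B 2] with hf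
  set g : V →ₗ[k] V := B.constr k
    ![B 0 - (α-β) • B 1, B 1, (-(2*(α-β))) • B 0 + ((α-β)^2) • B 1 + B 2] with hg
  have hfx : f (B 0) = B 0 + (α-β) • B 1 := by simp [hf]
  have hfy : f (B 1) = B 1 := by simp [hf]
  have hfz : f (B 2) = (2*(α-β)) • B 0 + ((α-β)^2) • B 1 + B 2 := by simp [hf]
  have hgx : g (B 0) = B 0 - (α-β) • B 1 := by simp [hg]
  have hgy : g (B 1) = B 1 := by simp [hg]
  have hgz : g (B 2) = (-(2*(α-β))) • B 0 + ((α-β)^2) • B 1 + B 2 := by simp [hg]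
  have hfg : f.comp g = LinearMap.id := by
    refine B.ext fun i => ?_
    fin_cases i <;>
      simp [hgx, hgy, hgz, hfx, hfy, hfz, map_add, map_sub, map_smul] <;> module
  have hgf : g.comp f = LinearMap.id := by
    refine B.ext fun i => ?_
    fin_cases i <;>
      simp [hgx, hgy, hgz, hfx, hfy, hfz, map_add, map_sub, map_smul] <;> module
  refine ⟨LinearEquiv.ofLinear f g hfg hgf, ?_⟩
  have hw : w = α • t x x y - (α-2*β) • t x y x + (β^2-α*β) • t x y y
      + t x y z - t x z y + α • t y x x - t y x z + t y z x - α • t y z y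
      + (α*β^2) • t y y y - (β^2-α*β) • t y y x - β • t y y z
      + t z x y - t z y x - β • t z y y := rfl
  have ht : ∀ a b c : V, t a b c = a ⊗ₜ[k] (b ⊗ₜ[k] c) := fun _ _ _ => rfl
  rw [hw]
  simp only [map_add, map_sub, map_smul, ht, hφ, TensorProduct.map_tmul,
    LinearMap.id_coe, id_eq, LinearEquiv.ofLinear_toLinearMap]
  show (α • (f y ⊗ₜ[k] (x ⊗ₜ[k] x)) - (α-2*β) • (f x ⊗ₜ[k] (x ⊗ₜ[k] y))
      + (β^2-α*β) • (f y ⊗ₜ[k] (x ⊗ₜ[k] y)) + f z ⊗ₜ[k] (x ⊗ₜ[k] y)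
      - f y ⊗ₜ[k] (x ⊗ₜ[k] z) + α • (f x ⊗ₜ[k] (y ⊗ₜ[k] x))
      - f z ⊗ₜ[k] (y ⊗ₜ[k] x) + f x ⊗ₜ[k] (y ⊗ₜ[k] z)
      - α • (f y ⊗ₜ[k] (y ⊗ₜ[k] z)) + (α*β^2) • (f y ⊗ₜ[k] (y ⊗ₜ[k] y))
      - (β^2-α*β) • (f x ⊗ₜ[k] (y ⊗ₜ[k] y)) - β • (f z ⊗ₜ[k] (y ⊗ₜ[k] y))
      + f y ⊗ₜ[k] (z ⊗ₜ[k] x) - f x ⊗ₜ[k] (z ⊗ₜ[k] y)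
      - β • (f y ⊗ₜ[k] (z ⊗ₜ[k] y))) = _
  show _ = (α • (x ⊗ₜ[k] (x ⊗ₜ[k] y)) - (α-2*β) • (x ⊗ₜ[k] (y ⊗ₜ[k] x))
      + (β^2-α*β) • (x ⊗ₜ[k] (y ⊗ₜ[k] y)) + x ⊗ₜ[k] (y ⊗ₜ[k] z)
      - x ⊗ₜ[k] (z ⊗ₜ[k] y) + α • (y ⊗ₜ[k] (x ⊗ₜ[k] x))
      - y ⊗ₜ[k] (x ⊗ₜ[k] z) + y ⊗ₜ[k] (z ⊗ₜ[k] x)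
      - α • (y ⊗ₜ[k] (z ⊗ₜ[k] y)) + (α*β^2) • (y ⊗ₜ[k] (y ⊗ₜ[k] y))
      - (β^2-α*β) • (y ⊗ₜ[k] (y ⊗ₜ[k] x)) - β • (y ⊗ₜ[k] (y ⊗ₜ[k] z))
      + z ⊗ₜ[k] (x ⊗ₜ[k] y) - z ⊗ₜ[k] (y ⊗ₜ[k] x) - β • (z ⊗ₜ[k] (y ⊗ₜ[k] y)))
  simp only [show x = B 0 from rfl, show y = B 1 from rfl, show z = B 2 from rfl,
    hfx, hfy, hfz, add_tmul, sub_tmul, ← smul_tmul']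
  module
end

section
/- (Type NC₂) The potential w = −2·xyx + xxz + zxx − 2·yxy + yyz + zyy + yzx + xzy ∈ V⊗V⊗V is a twisted superpotential; that is, there exists a linear automorphism θ of V such that (θ⊗id⊗id)(φ(w)) = w. -/
open TensorProduct

theorem stmt_14 (k : Type*) [Field k] [IsAlgClosed k] [CharZero k]
    (V : Type*) [AddCommGroup V] [Module k V] (B : Module.Basis (Fin 3) k V)
    (φ : (V ⊗[k] (V ⊗[k] V)) →ₗ[k] (V ⊗[k] (V ⊗[k] V)))
    (hφ : ∀ a b c : V, φ (a ⊗ₜ[k] (b ⊗ₜ[k] c)) = c ⊗ₜ[k] (a ⊗ₜ[k] b)) :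
    let x := B 0; let y := B 1; let z := B 2
    let t : V → V → V → V ⊗[k] (V ⊗[k] V) := fun u v w => u ⊗ₜ[k] (v ⊗ₜ[k] w)
    let w := - (2:k) • t x y x + t x x z + t z x x - (2:k) • t y x y + t y y z
      + t z y y + t y z x + t x z y
    ∃ θ : V ≃ₗ[k] V,
      TensorProduct.map θ.toLinearMap
        (TensorProduct.map (LinearMap.id : V →ₗ[k] V) (LinearMap.id : V →ₗ[k] V))
        (φ w) = w := by
  intro x y z t w
  refine ⟨B.equiv B (Equiv.swap 0 1), ?_⟩
  have hθ : ∀ i, (B.equiv B (Equiv.swap 0 1)).toLinearMap (B i) = B (Equiv.swap 0 1 i) := by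
    intro i; simp [Module.Basis.equiv_apply]
  simp only [w, t, x, y, z, map_add, map_sub, map_smul, map_neg, hφ,
    TensorProduct.map_tmul, LinearMap.id_coe, id_eq, hθ]
  norm_num [Equiv.swap_apply_left, Equiv.swap_apply_right, show (Equiv.swap (0:Fin 3) 1) 2 = 2 from rfl]
  module
end

section
/- (Type WL₁) For α, γ ∈ k with α ≠ 0 and α ≠ 1, the potential w = −(1+γ)·yyx + α(1+2γ)·yxy − α²(1+γ)·xyy + α²·xyz + yzx + α·zxy − α²·xzy − zyx − α·yxz ∈ V⊗V⊗V is a twisted superpotential; that is, there exists a linear automorphism θ of V such that (θ⊗id⊗id)(φ(w)) = w. -/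
open TensorProduct

theorem stmt_15 (k : Type*) [Field k] [IsAlgClosed k] [CharZero k]
    (V : Type*) [AddCommGroup V] [Module k V] (B : Module.Basis (Fin 3) k V)
    (φ : (V ⊗[k] (V ⊗[k] V)) →ₗ[k] (V ⊗[k] (V ⊗[k] V)))
    (hφ : ∀ a b c : V, φ (a ⊗ₜ[k] (b ⊗ₜ[k] c)) = c ⊗ₜ[k] (a ⊗ₜ[k] b))
    (α γ : k) (h0 : α ≠ 0) (h1 : α ≠ 1) :
    let x := B 0; let y := B 1; let z := B 2
    let t : V → V → V → V ⊗[k] (V ⊗[k] V) := fun u v w => u ⊗ₜ[k] (v ⊗ₜ[k] w)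
    let w := - (1+γ) • t y y x + (α*(1+2*γ)) • t y x y - (α^2*(1+γ)) • t x y y
      + α^2 • t x y z + t y z x + α • t z x y - α^2 • t x z y
      - t z y x - α • t y x z
    ∃ θ : V ≃ₗ[k] V,
      TensorProduct.map θ.toLinearMap
        (TensorProduct.map (LinearMap.id : V →ₗ[k] V) (LinearMap.id : V →ₗ[k] V))
        (φ w) = w := by
  intro x y z t w
  have hx : x = B 0 := rfl
  have hy : y = B 1 := rfl
  have hz : z = B 2 := rfl
  have ht : ∀ u v p : V, t u v p = u ⊗ₜ[k] (v ⊗ₜ[k] p) := fun _ _ _ => rfl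
  set f : V →ₗ[k] V := B.constr k
    ![(α^2) • B 0, α⁻¹ • B 1, (α⁻¹*(2+3*γ)) • B 1 + α⁻¹ • B 2] with hf
  set g : V →ₗ[k] V := B.constr k
    ![(α^2)⁻¹ • B 0, α • B 1, α • B 2 - (α*(2+3*γ)) • B 1] with hg
  have hfg : f.comp g = LinearMap.id := by
    apply B.ext
    intro i
    fin_cases i
    · show _ = LinearMap.id (B 0)
      simp [hf, hg, Module.Basis.constr_basis, map_add, map_sub, map_smul]
      match_scalars <;> field_simp
    · show _ = LinearMap.id (B 1)
      simp [hf, hg, Module.Basis.constr_basis, map_add, map_sub, map_smul]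
      match_scalars <;> field_simp
    · show _ = LinearMap.id (B 2)
      simp [hf, hg, Module.Basis.constr_basis, map_add, map_sub, map_smul]
      match_scalars <;> field_simp <;> ring
  have hgf : g.comp f = LinearMap.id := by
    apply B.ext
    intro i
    fin_cases i
    · show _ = LinearMap.id (B 0)
      simp [hf, hg, Module.Basis.constr_basis, map_add, map_sub, map_smul]
      match_scalars <;> field_simp
    · show _ = LinearMap.id (B 1)
      simp [hf, hg, Module.Basis.constr_basis, map_add, map_sub, map_smul]
      match_scalars <;> field_simp
    · show _ = LinearMap.id (B 2)
      simp [hf, hg, Module.Basis.constr_basis, map_add, map_sub, map_smul]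
      match_scalars <;> field_simp <;> ring
  refine ⟨LinearEquiv.ofLinear f g hfg hgf, ?_⟩
  have hw : w = - (1+γ) • t y y x + (α*(1+2*γ)) • t y x y - (α^2*(1+γ)) • t x y y
      + α^2 • t x y z + t y z x + α • t z x y - α^2 • t x z y
      - t z y x - α • t y x z := rfl
  simp only [hw, ht, hx, hy, hz, map_add, map_sub, map_neg, map_smul, hφ,
    TensorProduct.map_tmul, LinearMap.id_apply, LinearEquiv.ofLinear_apply,
    LinearEquiv.coe_coe, LinearEquiv.ofLinear_toLinearMap, hf, Module.Basis.constr_basis,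
    Matrix.cons_val_zero, Matrix.cons_val_one, Matrix.head_cons,
    Matrix.cons_val_two, Matrix.tail_cons]
  simp only [TensorProduct.add_tmul, ← TensorProduct.smul_tmul', smul_smul]
  match_scalars <;> field_simp <;> ring
end

section
/- (Type TL₁) For α ∈ k with α ≠ 0, the potential w = −α⁻²·zxy + α⁻¹·zyx + α²·yxz − α·yzx + α⁻¹·xzy − α·xyz − xxx ∈ V⊗V⊗V is a twisted superpotential; that is, there exists a linear automorphism θ of V such that (θ⊗id⊗id)(φ(w)) = w. -/
open TensorProduct

theorem stmt_16 (k : Type*) [Field k] [IsAlgClosed k] [CharZero k]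
    (V : Type*) [AddCommGroup V] [Module k V] (B : Module.Basis (Fin 3) k V)
    (φ : (V ⊗[k] (V ⊗[k] V)) →ₗ[k] (V ⊗[k] (V ⊗[k] V)))
    (hφ : ∀ a b c : V, φ (a ⊗ₜ[k] (b ⊗ₜ[k] c)) = c ⊗ₜ[k] (a ⊗ₜ[k] b))
    (α : k) (h : α ≠ 0) :
    let x := B 0; let y := B 1; let z := B 2
    let t : V → V → V → V ⊗[k] (V ⊗[k] V) := fun u v w => u ⊗ₜ[k] (v ⊗ₜ[k] w)
    let w := - (α^2)⁻¹ • t z x y + α⁻¹ • t z y x + α^2 • t y x z - α • t y z x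
      + α⁻¹ • t x z y - α • t x y z - t x x x
    ∃ θ : V ≃ₗ[k] V,
      TensorProduct.map θ.toLinearMap
        (TensorProduct.map (LinearMap.id : V →ₗ[k] V) (LinearMap.id : V →ₗ[k] V))
        (φ w) = w := by
  intro x y z t w
  set c : Fin 3 → k := ![1, α^3, (α^3)⁻¹] with hc
  have hα3 : α^3 ≠ 0 := pow_ne_zero _ h
  have hcne : ∀ i, c i ≠ 0 := by
    intro i
    fin_cases i <;> simp [hc, hα3]
  let θlin : V →ₗ[k] V := B.constr k (fun i => c i • B i)
  let θinv : V →ₗ[k] V := B.constr k (fun i => (c i)⁻¹ • B i)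
  have h1 : θlin ∘ₗ θinv = LinearMap.id := by
    apply B.ext; intro i
    simp [θlin, θinv, smul_smul, inv_mul_cancel₀ (hcne i)]
  have h2 : θinv ∘ₗ θlin = LinearMap.id := by
    apply B.ext; intro i
    simp [θlin, θinv, smul_smul, mul_inv_cancel₀ (hcne i)]
  refine ⟨LinearEquiv.ofLinear θlin θinv h1 h2, ?_⟩
  have hθ : ∀ i, θlin (B i) = c i • B i := fun i => B.constr_basis k _ i
  have hx : θlin x = x := by simpa [hc] using hθ 0
  have hy : θlin y = α^3 • y := by simpa [hc] using hθ 1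
  have hz : θlin z = (α^3)⁻¹ • z := by simpa [hc] using hθ 2
  show TensorProduct.map θlin _ (φ w) = w
  simp only [w, t, map_add, map_sub, map_neg, map_smul, hφ, TensorProduct.map_tmul,
    LinearMap.id_coe, id_eq, hx, hy, hz, ← smul_tmul', smul_smul]
  match_scalars <;> field_simp <;> ring
end

section
/- (Type TL₂) For β ∈ k, the potential w = β·xxy + β·xyx + (−β²−1)·xxx + 2·yxy − yyx − 2β·yxx + zxy − zyx − β·zxx − β·xxz + 2β·xzx − yxz + yzx − xzy + xyz − xyy ∈ V⊗V⊗V is a twisted superpotential; that is, there exists a linear automorphism θ of V such that (θ⊗id⊗id)(φ(w)) = w. -/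
open TensorProduct

theorem stmt_17 (k : Type*) [Field k] [IsAlgClosed k] [CharZero k]
    (V : Type*) [AddCommGroup V] [Module k V] (B : Module.Basis (Fin 3) k V)
    (φ : (V ⊗[k] (V ⊗[k] V)) →ₗ[k] (V ⊗[k] (V ⊗[k] V)))
    (hφ : ∀ a b c : V, φ (a ⊗ₜ[k] (b ⊗ₜ[k] c)) = c ⊗ₜ[k] (a ⊗ₜ[k] b))
    (β : k) :
    let x := B 0; let y := B 1; let z := B 2
    let t : V → V → V → V ⊗[k] (V ⊗[k] V) := fun u v w => u ⊗ₜ[k] (v ⊗ₜ[k] w)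
    let w := β • t x x y + β • t x y x + (-β^2-1) • t x x x + (2:k) • t y x y
      - t y y x - (2*β) • t y x x + t z x y - t z y x - β • t z x x
      - β • t x x z + (2*β) • t x z x - t y x z + t y z x - t x z y
      + t x y z - t x y y
    ∃ θ : V ≃ₗ[k] V,
      TensorProduct.map θ.toLinearMap
        (TensorProduct.map (LinearMap.id : V →ₗ[k] V) (LinearMap.id : V →ₗ[k] V))
        (φ w) = w := by
  intro x y z t w
  have key : ∀ (f g : Fin 3 → V), ((B.constr k f).comp (B.constr k g) = LinearMap.id ↔
      ∀ i, B.constr k f (g i) = B i) := by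
    intro f g
    constructor
    · intro h i
      have := LinearMap.congr_fun h (B i)
      simpa [Module.Basis.constr_basis] using this
    · intro h
      apply B.ext; intro i
      simpa [Module.Basis.constr_basis] using h i
  have h1 : ((B.constr k ![B 0, (3*β) • B 0 + B 1, (3*β) • B 0 + (3:k) • B 1 + B 2]).comp
      (B.constr k ![B 0, (-(3*β)) • B 0 + B 1, (6*β) • B 0 + (-3:k) • B 1 + B 2])) = LinearMap.id := by
    rw [key]; intro i
    fin_cases i <;>
      simp only [show (⟨0, by norm_num⟩ : Fin 3) = 0 from rfl, show (⟨1, by norm_num⟩ : Fin 3) = 1 from rfl,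
        show (⟨2, by norm_num⟩ : Fin 3) = 2 from rfl,
        Module.Basis.constr_basis, map_add, map_smul,
        Matrix.cons_val_zero, Matrix.cons_val_one, Matrix.head_cons, Matrix.cons_val_two,
        Matrix.tail_cons] <;>
      module
  have h2 : ((B.constr k ![B 0, (-(3*β)) • B 0 + B 1, (6*β) • B 0 + (-3:k) • B 1 + B 2]).comp
      (B.constr k ![B 0, (3*β) • B 0 + B 1, (3*β) • B 0 + (3:k) • B 1 + B 2])) = LinearMap.id := by
    rw [key]; intro i
    fin_cases i <;>
      simp only [show (⟨0, by norm_num⟩ : Fin 3) = 0 from rfl, show (⟨1, by norm_num⟩ : Fin 3) = 1 from rfl,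
        show (⟨2, by norm_num⟩ : Fin 3) = 2 from rfl,
        Module.Basis.constr_basis, map_add, map_smul,
        Matrix.cons_val_zero, Matrix.cons_val_one, Matrix.head_cons, Matrix.cons_val_two,
        Matrix.tail_cons] <;>
      module
  refine ⟨LinearEquiv.ofLinear _ _ h1 h2, ?_⟩
  show TensorProduct.map (B.constr k ![B 0, (3*β) • B 0 + B 1, (3*β) • B 0 + (3:k) • B 1 + B 2]) _ _ = _
  simp only [w, t, x, y, z, map_add, map_sub, map_smul, hφ, TensorProduct.map_tmul,
    LinearMap.id_coe, id_eq, Module.Basis.constr_basis, Matrix.cons_val_zero, Matrix.cons_val_one,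
    Matrix.head_cons, Matrix.cons_val_two, Matrix.tail_cons]
  simp only [add_tmul, ← smul_tmul', tmul_add, tmul_smul]
  module
end

section
/- (Type T₁ superpotential, ATV criterion data) Let w₀ = xyz + yzx + zxy − (xzy + zyx + yxz) + (xxy + xyx + yxx) − (yyx + yxy + xyy) ∈ V⊗V⊗V. Then: (i) φ(w₀) = w₀, i.e. w₀ is a superpotential; (ii) the partial derivatives are ∂ₓw₀ = yz − zy + xy + yx − yy, ∂ᵧw₀ = zx − xz + xx − yx − xy, ∂_zw₀ = xy − yx, and these three elements of V⊗V are linearly independent over k; (iii) for the 3×3 matrix M with rows (y, x−y−z, y), (x−y+z, −x, −x), (−y, x, 0) (entries in V), in the free algebra k⟨x,y,z⟩ both the column product M·(x,y,z)ᵗ and the row product (x,y,z)·M equal the triple (∂ₓw₀, ∂ᵧw₀, ∂_zw₀); and (iv) for every (a,b,c) ∈ k³, if all nine 2×2 minors of M, viewed as commutative polynomials in x, y, z, vanish at (a,b,c), then (a,b,c) = (0,0,0). -/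
open TensorProduct
set_option maxHeartbeats 2000000 in

/-- (Type T₁ superpotential, ATV criterion data) For
`w₀ = xyz + yzx + zxy − (xzy + zyx + yxz) + (xxy + xyx + yxx) − (yyx + yxy + xyy)`:
(i) `w₀` is a superpotential; (ii) its partial derivatives are as stated and are
linearly independent; (iii) for the matrix `M`, both `M·(x,y,z)ᵗ` and `(x,y,z)·M`
(computed in the free algebra) equal the triple of partial derivatives; (iv) the nine
`2×2` minors of `M` (as commutative polynomials) have no common zero besides the origin. -/
theorem stmt_18 (k : Type*) [Field k] [IsAlgClosed k] [CharZero k]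
    (V : Type*) [AddCommGroup V] [Module k V] (B : Module.Basis (Fin 3) k V)
    (φ : (V ⊗[k] (V ⊗[k] V)) →ₗ[k] (V ⊗[k] (V ⊗[k] V)))
    (hφ : ∀ a b c : V, φ (a ⊗ₜ[k] (b ⊗ₜ[k] c)) = c ⊗ₜ[k] (a ⊗ₜ[k] b)) :
    let x := B 0; let y := B 1; let z := B 2
    let t : V → V → V → V ⊗[k] (V ⊗[k] V) := fun u v w => u ⊗ₜ[k] (v ⊗ₜ[k] w)
    let w₀ := t x y z + t y z x + t z x y - (t x z y + t z y x + t y x z)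
      + (t x x y + t x y x + t y x x) - (t y y x + t y x y + t x y y)
    -- the partial derivatives of w₀, as elements of V ⊗ V
    let d₁ : V ⊗[k] V := y ⊗ₜ[k] z - z ⊗ₜ[k] y + x ⊗ₜ[k] y + y ⊗ₜ[k] x - y ⊗ₜ[k] y
    let d₂ : V ⊗[k] V := z ⊗ₜ[k] x - x ⊗ₜ[k] z + x ⊗ₜ[k] x - y ⊗ₜ[k] x - x ⊗ₜ[k] y
    let d₃ : V ⊗[k] V := x ⊗ₜ[k] y - y ⊗ₜ[k] x
    -- the generators X, Y, Z of the free algebra k⟨x,y,z⟩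
    let X : FreeAlgebra k (Fin 3) := FreeAlgebra.ι k 0
    let Y : FreeAlgebra k (Fin 3) := FreeAlgebra.ι k 1
    let Z : FreeAlgebra k (Fin 3) := FreeAlgebra.ι k 2
    -- the partial derivatives of w₀, as elements of the free algebra
    let D₁ := Y * Z - Z * Y + X * Y + Y * X - Y * Y
    let D₂ := Z * X - X * Z + X * X - Y * X - X * Y
    let D₃ := X * Y - Y * X
    -- the matrix M with rows (y, x−y−z, y), (x−y+z, −x, −x), (−y, x, 0)
    let M : Matrix (Fin 3) (Fin 3) (FreeAlgebra k (Fin 3)) :=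
      !![Y, X - Y - Z, Y; X - Y + Z, -X, -X; -Y, X, 0]
    -- the same matrix with entries regarded as commutative polynomials in x, y, z
    let Xc : Fin 3 → MvPolynomial (Fin 3) k := MvPolynomial.X
    let Mc : Matrix (Fin 3) (Fin 3) (MvPolynomial (Fin 3) k) :=
      !![Xc 1, Xc 0 - Xc 1 - Xc 2, Xc 1; Xc 0 - Xc 1 + Xc 2, -Xc 0, -Xc 0; -Xc 1, Xc 0, 0]
    -- (i) w₀ is a superpotential
    (φ w₀ = w₀) ∧
    -- (ii) the partial derivatives are d₁, d₂, d₃, and they are linearly independent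
    (w₀ = x ⊗ₜ[k] d₁ + y ⊗ₜ[k] d₂ + z ⊗ₜ[k] d₃) ∧
    LinearIndependent k ![d₁, d₂, d₃] ∧
    -- (iii) M·(x,y,z)ᵗ = (∂ₓw₀, ∂ᵧw₀, ∂_zw₀) = (x,y,z)·M in the free algebra
    (M.mulVec ![X, Y, Z] = ![D₁, D₂, D₃]) ∧
    (Matrix.vecMul ![X, Y, Z] M = ![D₁, D₂, D₃]) ∧
    -- (iv) the nine 2×2 minors of M have no common zero other than (0,0,0)
    (∀ a b c : k,
      (∀ i j : Fin 3,
        MvPolynomial.eval ![a, b, c] ((Mc.submatrix i.succAbove j.succAbove).det) = 0) →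
      a = 0 ∧ b = 0 ∧ c = 0) := by
  intro x y z t w₀ d₁ d₂ d₃ X Y Z D₁ D₂ D₃ M Xc Mc
  refine ⟨?_, ?_, ?_, ?_, ?_, ?_⟩
  · simp only [w₀, t, map_add, map_sub, hφ]
    abel
  · simp only [w₀, t, d₁, d₂, d₃, tmul_add, tmul_sub]
    abel
  · rw [Fintype.linearIndependent_iff]
    intro g hg
    simp only [Fin.sum_univ_three, Matrix.cons_val_zero, Matrix.cons_val_one,
      Matrix.head_cons, Matrix.cons_val_two, Matrix.tail_cons] at hg
    have key : ∀ p : Fin 3 × Fin 3,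
        ((B.tensorProduct B).repr (g 0 • d₁ + g 1 • d₂ + g 2 • d₃)) p = 0 := by
      rw [hg]; simp
    have h1 := key (1, 2)
    have h2 := key (2, 0)
    have h3 := key (0, 1)
    simp only [d₁, d₂, d₃, x, y, z, map_add, map_smul, map_sub, Finsupp.coe_add,
      Finsupp.coe_smul, Finsupp.coe_sub, Pi.add_apply, Pi.smul_apply, Pi.sub_apply,
      Module.Basis.tensorProduct_repr_tmul_apply, Module.Basis.repr_self, smul_eq_mul] at h1 h2 h3
    simp [Finsupp.single_apply] at h1 h2 h3
    have h4 : g 2 = 0 := by linear_combination h3 - h1 + h2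
    intro i
    fin_cases i
    · exact h1
    · exact h2
    · exact h4
  · funext i
    fin_cases i <;>
      simp [M, X, Y, Z, D₁, D₂, D₃, Matrix.mulVec, dotProduct,
        Fin.sum_univ_three] <;> noncomm_ring
  · funext j
    fin_cases j <;>
      simp [M, X, Y, Z, D₁, D₂, D₃, Matrix.vecMul, dotProduct,
        Fin.sum_univ_three] <;> noncomm_ring
  · intro a b c h
    have h1 := h 0 0
    have h2 := h 1 1
    have h3 := h 2 2
    simp only [Mc, Xc, Matrix.det_fin_two, Matrix.submatrix_apply, Fin.succAbove,
      Fin.isValue] at h1 h2 h3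
    norm_num [Fin.lt_def, Matrix.cons_val_zero, Matrix.cons_val_one, Matrix.head_cons,
      Fin.castSucc, Fin.succ, Fin.castAdd, Fin.castLE] at h1 h2 h3
    subst h1; subst h2
    have hc : c = 0 := by
      have hcc : c * c = 0 := by
        have e : (![0, 0, c] : Fin 3 → k) 2 = c := rfl
        rw [e] at h3; linear_combination h3
      exact mul_self_eq_zero.mp hcc
    exact ⟨rfl, rfl, hc⟩
end

section
/- (Type S₁ as an MS twist of a superpotential) Let α, β, γ ∈ k be nonzero, and let a, b ∈ k satisfy a³ = β/γ and b³ = γ/α. Set c := (ab)⁻¹, δ := α·a·b², ε := a²b/β, let θ be the linear automorphism of V with θ(x) = a·x, θ(y) = b·y, θ(z) = c·z, and let w₀ = xyz + yzx + zxy − δ·(xzy + zyx + yxz) ∈ V⊗V⊗V. Then: (i) δ³ = αβγ; (ii) φ(w₀) = w₀ and (θ⊗θ⊗θ)(w₀) = w₀, so θ ∈ Aut(w₀); and (iii) the MS twist satisfies (θ²⊗θ⊗id)(w₀) = ε·(β·xyz + γ·yzx + α·zxy − αβ·xzy − αγ·zyx − βγ·yxz), with ε ≠ 0. -/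
open TensorProduct

/-- (Type S₁ as an MS twist of a superpotential) With `a³ = β/γ`, `b³ = γ/α`,
`c = (ab)⁻¹`, `δ = αab²`, `ε = a²b/β`, `θ = diag(a,b,c)`, and
`w₀ = xyz + yzx + zxy − δ(xzy + zyx + yxz)`: (i) `δ³ = αβγ`; (ii) `w₀` is a
superpotential fixed by `θ⊗θ⊗θ`, so `θ ∈ Aut(w₀)`; (iii) the MS twist
`(θ²⊗θ⊗id)(w₀)` equals `ε` times the Type S₁ potential, and `ε ≠ 0`. -/
theorem stmt_19 (k : Type*) [Field k] [IsAlgClosed k] [CharZero k]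
    (V : Type*) [AddCommGroup V] [Module k V] (B : Module.Basis (Fin 3) k V)
    (φ : (V ⊗[k] (V ⊗[k] V)) →ₗ[k] (V ⊗[k] (V ⊗[k] V)))
    (hφ : ∀ u v w : V, φ (u ⊗ₜ[k] (v ⊗ₜ[k] w)) = w ⊗ₜ[k] (u ⊗ₜ[k] v))
    (α β γ : k) (hα : α ≠ 0) (hβ : β ≠ 0) (hγ : γ ≠ 0)
    (a b : k) (ha : a^3 = β / γ) (hb : b^3 = γ / α)
    (θ : V ≃ₗ[k] V) (hθx : θ (B 0) = a • B 0) (hθy : θ (B 1) = b • B 1)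
    (hθz : θ (B 2) = (a*b)⁻¹ • B 2) :
    let c := (a*b)⁻¹
    let δ := α * a * b^2
    let ε := a^2 * b / β
    let x := B 0; let y := B 1; let z := B 2
    let t : V → V → V → V ⊗[k] (V ⊗[k] V) := fun u v w => u ⊗ₜ[k] (v ⊗ₜ[k] w)
    let w₀ := t x y z + t y z x + t z x y - δ • (t x z y + t z y x + t y x z)
    -- (i) δ³ = αβγ
    δ^3 = α * β * γ ∧
    -- (ii) w₀ is a superpotential and (θ⊗θ⊗θ)(w₀) = w₀, so θ ∈ Aut(w₀)
    φ w₀ = w₀ ∧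
    TensorProduct.map θ.toLinearMap
      (TensorProduct.map θ.toLinearMap θ.toLinearMap) w₀ = w₀ ∧
    -- (iii) the MS twist (θ²⊗θ⊗id)(w₀) is ε times the Type S₁ potential, with ε ≠ 0
    TensorProduct.map (θ.toLinearMap ∘ₗ θ.toLinearMap)
        (TensorProduct.map θ.toLinearMap (LinearMap.id : V →ₗ[k] V)) w₀
      = ε • (β • t x y z + γ • t y z x + α • t z x y
          - (α*β) • t x z y - (α*γ) • t z y x - (β*γ) • t y x z) ∧
    ε ≠ 0 := by
  have ha3 : a^3 * γ = β := by rw [ha]; field_simp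
  have hb3 : b^3 * α = γ := by rw [hb]; field_simp
  have ha0 : a ≠ 0 := by
    intro h; apply hβ; rw [← ha3, h]; ring
  have hb0 : b ≠ 0 := by
    intro h; apply hγ; rw [← hb3, h]; ring
  intro c δ ε x y z t w₀
  refine ⟨?_, ?_, ?_, ?_, ?_⟩
  · simp only [δ]
    linear_combination (α*a^3*(α*b^3 + γ))*hb3 + (α*γ)*ha3
  · simp only [w₀, map_add, map_sub, map_smul, hφ, t]
    abel
  · simp only [w₀, t, x, y, z, c, δ, map_add, map_sub, map_smul,
      TensorProduct.map_tmul, LinearEquiv.coe_coe, hθx, hθy, hθz,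
      TensorProduct.tmul_smul, ← TensorProduct.smul_tmul', smul_smul]
    match_scalars <;> field_simp <;> ring
  · simp only [w₀, t, x, y, z, c, δ, ε, map_add, map_sub, map_smul,
      TensorProduct.map_tmul, LinearEquiv.coe_coe, LinearMap.comp_apply,
      LinearMap.id_coe, id_eq, hθx, hθy, hθz,
      TensorProduct.tmul_smul, ← TensorProduct.smul_tmul', smul_smul]
    match_scalars <;> field_simp
    · linear_combination -ha3
    · linear_combination -ha3 - a^3*hb3
    · linear_combination ha3
    · linear_combination -hb3
  · simp only [ε]
    exact div_ne_zero (mul_ne_zero (pow_ne_zero 2 ha0) hb0) hβ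
end
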